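/- If T is an isometry of a non-degenerate symmetric or alternating bilinear form on a finite-dimensional space over an algebraically closed field of characteristic 0, then the characteristic polynomial of T factors as (x−1)^l (x+1)^m q(x), where q is self-dual: for every root λ of q, λ^{-1} is a root of q with the same multiplicity. -/

import Mathlib

open Polynomial Matrix

lemma auxStmt16_reverse_pow {R : Type*} [CommRing R] [NoZeroDivisors R] (p : R[X]) (n : ℕ) :
    (p ^ n).reverse = p.reverse ^ n := by
  induction n with
  | zero => simp [reverse]
  | succ n ih => rw [pow_succ, reverse_mul_of_domain, ih, pow_succ]

lemma auxStmt16_reverse_X_sub_C {R : Type*} [CommRing R] [Nontrivial R] (μ : R) :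
    (X - C μ).reverse = 1 - C μ * X := by
  have h1 : (X - C μ).natDegree = 1 := natDegree_X_sub_C μ
  rw [reverse, h1]
  rw [show (X - C μ : R[X]) = X ^ 1 - C μ * X ^ 0 by simp]
  rw [reflect_sub, reflect_monomial, reflect_C_mul_X_pow]
  simp [revAt_le]

lemma auxStmt16_rm_reverse {F : Type*} [Field F] (p : F[X]) (hp : p ≠ 0) (lam : F)
    (hlam : lam ≠ 0) : p.reverse.rootMultiplicity lam = p.rootMultiplicity lam⁻¹ := by
  set μ := lam⁻¹ with hμdef
  have hμ : μ ≠ 0 := inv_ne_zero hlam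
  set m := p.rootMultiplicity μ with hmdef
  set q := p /ₘ (X - C μ) ^ m with hqdef
  have hfac : (X - C μ) ^ m * q = p := p.pow_mul_divByMonic_rootMultiplicity_eq μ
  have hqev : q.eval μ ≠ 0 := eval_divByMonic_pow_rootMultiplicity_ne_zero μ hp
  have hq0 : q ≠ 0 := fun h => hqev (by simp [h])
  have hrevq : q.reverse ≠ 0 := fun h => hq0 (reverse_eq_zero.mp h)
  have hrevq_ev : q.reverse.eval lam ≠ 0 := by
    letI : Invertible μ := invertibleOfNonzero hμ
    intro h
    apply hqev
    have := (eval₂_reverse_eq_zero_iff (RingHom.id F) μ q).mp ?_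
    · simpa using this
    · have hinv : (⅟ μ : F) = lam := by
        rw [invOf_eq_inv μ, hμdef, inv_inv]
      rw [hinv]
      simpa using h
  have key : p.reverse = (C (-μ)) ^ m * ((X - C lam) ^ m * q.reverse) := by
    rw [← hfac, reverse_mul_of_domain, auxStmt16_reverse_pow, auxStmt16_reverse_X_sub_C]
    have h2 : (-μ) * lam = -1 := by
      rw [neg_mul, hμdef, inv_mul_cancel₀ hlam]
    have : (1 - C μ * X : F[X]) = C (-μ) * (X - C lam) := by
      rw [mul_sub, ← C_mul, h2, C_neg, C_neg, C_1]
      ring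
    rw [this, mul_pow, mul_assoc]
  have hne : (C (-μ) : F[X]) ^ m * ((X - C lam) ^ m * q.reverse) ≠ 0 := by
    apply mul_ne_zero
    · exact pow_ne_zero _ (by simpa using neg_ne_zero.mpr hμ)
    · exact mul_ne_zero (pow_ne_zero _ (X_sub_C_ne_zero lam)) hrevq
  rw [key, rootMultiplicity_mul hne, rootMultiplicity_mul (by
        exact mul_ne_zero (pow_ne_zero _ (X_sub_C_ne_zero lam)) hrevq),
    rootMultiplicity_X_sub_C_pow, ← C_pow, rootMultiplicity_C,
    rootMultiplicity_eq_zero (by simpa [IsRoot] using hrevq_ev)]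
  omega

/-- For an isometry of a nondegenerate bilinear form, the reverse of the characteristic
polynomial is a nonzero constant multiple of the characteristic polynomial. -/
lemma auxStmt16_reverse_charpoly {F V : Type*} [Field F]
    [AddCommGroup V] [Module F V] [FiniteDimensional F V]
    (B : LinearMap.BilinForm F V) (hB : B.Nondegenerate)
    (T : V →ₗ[F] V) (hT : ∀ v w, B (T v) (T w) = B v w) :
    ∃ c : F, c ≠ 0 ∧ (LinearMap.charpoly T).reverse = C c * LinearMap.charpoly T := by
  classical
  set χ := LinearMap.charpoly T with hχdef
  let b := Module.finBasis F V
  set ι := Fin (Module.finrank F V)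
  set A := LinearMap.toMatrix b b T with hA
  set G := BilinForm.toMatrix b B with hG
  have hχA : A.charpoly = χ := LinearMap.charpoly_toMatrix T b
  have hG_ne : G.det ≠ 0 := (LinearMap.BilinForm.nondegenerate_iff_det_ne_zero b).mp hB
  have hid : B.comp T T = B := by
    ext v w
    simpa using hT v w
  have hAGA : Aᵀ * G * A = G := by
    have h := BilinForm.toMatrix_comp (b := b) b B T T
    rw [hid] at h
    exact h.symm
  have hAdet : A.det ≠ 0 := by
    intro h0
    apply hG_ne
    have h := congrArg Matrix.det hAGA
    rw [Matrix.det_mul, Matrix.det_mul, Matrix.det_transpose, h0] at h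
    simpa using h.symm
  -- move to polynomial matrices
  have hmapAGA : (A.map C)ᵀ * (G.map C) * (A.map C) = G.map C := by
    rw [← Matrix.transpose_map, ← Matrix.map_mul, ← Matrix.map_mul, hAGA]
  have e1 : (G.map C) * (1 - (X : F[X]) • A.map C)
      = ((A.map C)ᵀ - (X : F[X]) • 1) * ((G.map C) * (A.map C)) := by
    rw [mul_sub, mul_one, Matrix.mul_smul, sub_mul, Matrix.smul_mul, one_mul,
      ← Matrix.mul_assoc, hmapAGA]
  have hscalar : (X : F[X]) • (1 : Matrix ι ι F[X]) = Matrix.scalar ι X := by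
    rw [Matrix.smul_eq_diagonal_mul, mul_one, Matrix.scalar_apply]
  have e4 : ((A.map C)ᵀ - (X : F[X]) • 1) = (- charmatrix A)ᵀ := by
    rw [Matrix.charmatrix, RingHom.mapMatrix_apply, neg_sub, transpose_sub, hscalar]
    rw [show ((Matrix.scalar ι) X)ᵀ = (Matrix.scalar ι) X from by
      rw [Matrix.scalar_apply, Matrix.diagonal_transpose]]
  -- take determinants
  have e2 : C G.det * A.charpolyRev
      = (-1 : F[X]) ^ Fintype.card ι * A.charpoly * (C G.det * C A.det) := by
    have h := congrArg Matrix.det e1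
    rw [Matrix.det_mul, Matrix.det_mul, e4, Matrix.det_transpose, Matrix.det_neg,
      Matrix.det_mul] at h
    have hdg : (G.map (C : F →+* F[X])).det = C G.det := by
      rw [RingHom.map_det, RingHom.mapMatrix_apply]
    have hda : (A.map (C : F →+* F[X])).det = C A.det := by
      rw [RingHom.map_det, RingHom.mapMatrix_apply]
    rw [hdg, hda] at h
    rw [Matrix.charpolyRev, Matrix.charpoly]
    exact h
  have hCG : (C G.det : F[X]) ≠ 0 := fun h => hG_ne (by simpa using h)
  have e5 : A.charpolyRev = C ((-1 : F) ^ Fintype.card ι * A.det) * A.charpoly := by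
    apply mul_left_cancel₀ hCG
    rw [e2]
    rw [Polynomial.C_mul, Polynomial.C_pow, Polynomial.C_neg, Polynomial.C_1]
    ring
  refine ⟨(-1 : F) ^ Fintype.card ι * A.det, ?_, ?_⟩
  · exact mul_ne_zero (pow_ne_zero _ (neg_ne_zero.mpr one_ne_zero)) hAdet
  · rw [← hχA, Matrix.reverse_charpoly, e5]

/-- The characteristic polynomial of an isometry `T` of a non-degenerate symmetric or
alternating bilinear form over an algebraically closed field of characteristic 0 factors as
`(x-1)^l (x+1)^m q(x)` where `q(±1) ≠ 0` and `q` is self-dual: each root `λ` of `q` is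
non-zero and `λ⁻¹` is a root of `q` with the same multiplicity. -/
theorem stmt16 {F V : Type*} [Field F] [IsAlgClosed F] [CharZero F]
    [AddCommGroup V] [Module F V] [FiniteDimensional F V]
    (B : LinearMap.BilinForm F V) (hB : B.Nondegenerate) (hBsa : B.IsSymm ∨ B.IsAlt)
    (T : V →ₗ[F] V) (hT : ∀ v w, B (T v) (T w) = B v w) :
    ∃ (l m : ℕ) (q : F[X]),
      LinearMap.charpoly T = (X - 1) ^ l * (X + 1) ^ m * q ∧
      q ≠ 0 ∧ q.eval 1 ≠ 0 ∧ q.eval (-1) ≠ 0 ∧ q.eval 0 ≠ 0 ∧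
      ∀ lam : F, lam ≠ 0 → q.rootMultiplicity lam = q.rootMultiplicity lam⁻¹ := by
  classical
  obtain ⟨c, hc, hrev⟩ := auxStmt16_reverse_charpoly B hB T hT
  set χ := LinearMap.charpoly T with hχdef
  have hχ0 : χ ≠ 0 := (LinearMap.charpoly_monic T).ne_zero
  -- χ(0) ≠ 0
  have hee : c * χ.eval 0 = 1 := by
    have h := congrArg (eval 0) hrev
    rw [eval_mul, eval_C] at h
    rw [← h, ← coeff_zero_eq_eval_zero, coeff_zero_reverse]
    exact (LinearMap.charpoly_monic T).leadingCoeff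
  have hχeval0 : χ.eval 0 ≠ 0 := by
    intro h
    rw [h, mul_zero] at hee
    exact zero_ne_one hee
  -- symmetry of root multiplicities of χ
  have hsym : ∀ lam : F, lam ≠ 0 → χ.rootMultiplicity lam = χ.rootMultiplicity lam⁻¹ := by
    intro lam hlam
    have h1 : χ.reverse.rootMultiplicity lam⁻¹ = χ.rootMultiplicity lam := by
      rw [auxStmt16_rm_reverse χ hχ0 lam⁻¹ (inv_ne_zero hlam), inv_inv]
    rw [hrev, rootMultiplicity_mul (mul_ne_zero (fun h => hc (by simpa using h)) hχ0),
      rootMultiplicity_C, zero_add] at h1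
    exact h1.symm
  -- extract the factors (X-1)^l and (X+1)^m
  set l := χ.rootMultiplicity 1 with hldef
  set p1 := χ /ₘ (X - C 1) ^ l with hp1def
  have hf1 : (X - C (1 : F)) ^ l * p1 = χ := χ.pow_mul_divByMonic_rootMultiplicity_eq 1
  have hp1 : p1.eval 1 ≠ 0 := eval_divByMonic_pow_rootMultiplicity_ne_zero 1 hχ0
  have hp1ne : p1 ≠ 0 := fun h => hp1 (by simp [h])
  set m := p1.rootMultiplicity (-1) with hmdef
  set q := p1 /ₘ (X - C (-1)) ^ m with hqdef
  have hf2 : (X - C (-1 : F)) ^ m * q = p1 := p1.pow_mul_divByMonic_rootMultiplicity_eq (-1)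
  have hqm1 : q.eval (-1) ≠ 0 := eval_divByMonic_pow_rootMultiplicity_ne_zero (-1) hp1ne
  have hq0 : q ≠ 0 := fun h => hqm1 (by simp [h])
  have hfac : χ = (X - 1) ^ l * (X + 1) ^ m * q := by
    rw [← hf1, ← hf2, C_neg, C_1, sub_neg_eq_add]
    ring
  have hq1 : q.eval 1 ≠ 0 := by
    intro h
    apply hp1
    rw [← hf2, eval_mul, h, mul_zero]
  have hqe0 : q.eval 0 ≠ 0 := by
    intro h
    apply hχeval0
    rw [hfac, eval_mul, h, mul_zero]
  -- transfer root multiplicities from χ to q away from ±1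
  have hrm_eq : ∀ μ : F, μ ≠ 1 → μ ≠ -1 → q.rootMultiplicity μ = χ.rootMultiplicity μ := by
    intro μ h1 h2
    have hne1 : ((X - 1 : F[X]) ^ l).rootMultiplicity μ = 0 := by
      apply rootMultiplicity_eq_zero
      simp only [IsRoot, eval_pow, eval_sub, eval_X, eval_one]
      exact pow_ne_zero _ (sub_ne_zero.mpr h1)
    have hne2 : ((X + 1 : F[X]) ^ m).rootMultiplicity μ = 0 := by
      apply rootMultiplicity_eq_zero
      simp only [IsRoot, eval_pow, eval_add, eval_X, eval_one]
      exact pow_ne_zero _ (fun h => h2 (eq_neg_of_add_eq_zero_left h))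
    have hχne : ((X - 1 : F[X]) ^ l * (X + 1) ^ m * q) ≠ 0 := by
      rw [← hfac]; exact hχ0
    have hx1 : (X - 1 : F[X]) ≠ 0 := by simpa using X_sub_C_ne_zero (1 : F)
    have hx2 : (X + 1 : F[X]) ≠ 0 := by simpa [sub_neg_eq_add] using X_sub_C_ne_zero (-1 : F)
    rw [hfac, rootMultiplicity_mul hχne,
      rootMultiplicity_mul (mul_ne_zero (pow_ne_zero _ hx1) (pow_ne_zero _ hx2)), hne1, hne2]
    omega
  refine ⟨l, m, q, hfac, hq0, hq1, hqm1, hqe0, ?_⟩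
  intro lam hlam
  by_cases hl1 : lam = 1
  · rw [hl1, inv_one]
  by_cases hl2 : lam = -1
  · rw [hl2, inv_neg_one]
  · have hinv1 : lam⁻¹ ≠ 1 := fun h => hl1 (by rw [← inv_inv lam, h, inv_one])
    have hinv2 : lam⁻¹ ≠ -1 := fun h => hl2 (by rw [← inv_inv lam, h, inv_neg_one])
    rw [hrm_eq lam hl1 hl2, hrm_eq lam⁻¹ hinv1 hinv2, hsym lam hlam]
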